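/- arXiv:2004.02717 — 3 statements merged into one kernel-verified Lean document; each statement's English description precedes it below -/
import Mathlib

section
/- If ps_a does not divide b_a, then the strengthened capacity constraint Σ_{p: a∈p} (bw^{d(p)}_{a,p}(c)/ps_a) y_p ≤ ⌊b_a/ps_a⌋ is strictly stronger than the original constraint over the nonnegative reals: the polytope it defines (together with y_p ≥ 0) is strictly contained in the polytope defined by the original constraint Σ_{p: a∈p} bw^{d(p)}_{a,p}(c) y_p ≤ b_a, provided at least one coefficient bw^{d(p)}_{a,p}(c) is positive. -/
/-- If `ps` does not divide the capacity `b` and some coefficient is positive, the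
polytope of the strengthened constraint is strictly contained in that of the original
capacity constraint (over nonnegative reals). -/
theorem strengthened_polytope_strictly_smaller
    {P : Type} [Fintype P] (coef : P → ℕ) (ps : ℕ) (hps : 0 < ps)
    (hdvd : ∀ p, ps ∣ coef p) (b : ℚ) (hb : 0 < b)
    (hnd : ∀ k : ℤ, (k : ℚ) * (ps : ℚ) ≠ b)
    (p0 : P) (hp0 : 0 < coef p0) :
    {y : P → ℝ | (∀ p, 0 ≤ y p) ∧
        ∑ p : P, ((coef p / ps : ℕ) : ℝ) * y p ≤ ((⌊b / ps⌋ : ℤ) : ℝ)} ⊂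
      {y : P → ℝ | (∀ p, 0 ≤ y p) ∧ ∑ p : P, (coef p : ℝ) * y p ≤ ((b : ℚ) : ℝ)} := by
  classical
  have hpsR : (0 : ℝ) < (ps : ℝ) := by exact_mod_cast hps
  have hfloor_lt : ((⌊b / ps⌋ : ℤ) : ℚ) < b / ps := by
    refine lt_of_le_of_ne (Int.floor_le _) fun h => ?_
    apply hnd ⌊b / ps⌋
    have hps' : (ps : ℚ) ≠ 0 := by positivity
    field_simp at h
    linarith
  have hcoef_cast : ∀ p, ((coef p / ps : ℕ) : ℝ) = (coef p : ℝ) / ps := by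
    intro p
    obtain ⟨c, hc⟩ := hdvd p
    rw [hc, Nat.mul_div_cancel_left _ hps]
    push_cast
    field_simp
  have hsub : {y : P → ℝ | (∀ p, 0 ≤ y p) ∧
        ∑ p : P, ((coef p / ps : ℕ) : ℝ) * y p ≤ ((⌊b / ps⌋ : ℤ) : ℝ)} ⊆
      {y : P → ℝ | (∀ p, 0 ≤ y p) ∧ ∑ p : P, (coef p : ℝ) * y p ≤ ((b : ℚ) : ℝ)} := by
    rintro y ⟨hy, hsum⟩
    refine ⟨hy, ?_⟩
    have h1 : ∑ p : P, (coef p : ℝ) * y p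
        = (ps : ℝ) * ∑ p : P, ((coef p / ps : ℕ) : ℝ) * y p := by
      rw [Finset.mul_sum]
      refine Finset.sum_congr rfl fun p _ => ?_
      rw [hcoef_cast p]
      field_simp
    have h2 : ((⌊b / ps⌋ : ℤ) : ℝ) ≤ (b : ℝ) / ps := by
      exact_mod_cast le_of_lt hfloor_lt
    rw [h1]
    calc (ps : ℝ) * ∑ p : P, ((coef p / ps : ℕ) : ℝ) * y p
        ≤ (ps : ℝ) * ((b : ℝ) / ps) := by
          apply mul_le_mul_of_nonneg_left (le_trans hsum h2) (le_of_lt hpsR)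
      _ = (b : ℝ) := by field_simp
  rw [Set.ssubset_iff_of_subset hsub]
  refine ⟨fun p => if p = p0 then (b : ℝ) / (coef p0) else 0, ⟨?_, ?_⟩, ?_⟩
  · intro p
    by_cases h : p = p0 <;> simp [h]
    positivity
  · have : ∑ p : P, (coef p : ℝ) * (if p = p0 then (b : ℝ) / (coef p0) else 0)
        = (coef p0 : ℝ) * ((b : ℝ) / (coef p0)) := by
      rw [Finset.sum_eq_single p0]
      · simp
      · intro p _ hp; simp [hp]
      · intro h; exact absurd (Finset.mem_univ p0) h
    rw [this]
    have hc0 : (coef p0 : ℝ) ≠ 0 := by exact_mod_cast hp0.ne'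
    field_simp
    norm_num
  · rintro ⟨-, hsum⟩
    have : ∑ p : P, ((coef p / ps : ℕ) : ℝ) * (if p = p0 then (b : ℝ) / (coef p0) else 0)
        = (b : ℝ) / ps := by
      rw [Finset.sum_eq_single p0]
      · rw [hcoef_cast p0]
        have hc0 : (coef p0 : ℝ) ≠ 0 := by exact_mod_cast hp0.ne'
        simp only [if_pos rfl]
        field_simp
        ring
        simp only [if_true]
        field_simp
      · intro p _ hp; simp [hp]
      · intro h; exact absurd (Finset.mem_univ p0) h
    rw [this] at hsum
    have : ((⌊b / ps⌋ : ℤ) : ℝ) < (b : ℝ) / ps := by exact_mod_cast hfloor_lt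
    linarith
end

section
/- The decision version DND of the Deterministic Networking problem is NP-hard: the k-arc-disjoint-paths problem in a directed graph reduces in polynomial time to DND. Concretely, with C = 1 cycle, k identical demands from s to t each with bw^d_0 = 1, unit arc capacities b_a = 1, and threshold ℓ = k, the DN instance has a feasible solution of objective value ≥ k if and only if G contains k pairwise arc-disjoint directed s-t paths. -/
open scoped Classical

/-- A directed s-t path in the arc set `E`, given as a nonempty list of arcs without
repetition, consecutive arcs matching, starting at `s` and ending at `t`. -/
def IsSTPath {V : Type} (E : Finset (V × V)) (s t : V) (l : List (V × V)) : Prop :=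
  l ≠ [] ∧ l.Nodup ∧ (∀ a ∈ l, a ∈ E) ∧
    (l.head?.map Prod.fst = some s) ∧ (l.getLast?.map Prod.snd = some t) ∧
    l.Chain' (fun a b => a.2 = b.1)

/-- NP-hardness reduction from `k` arc-disjoint paths: with `C = 1`, `k` identical unit
demands from `s` to `t`, unit arc capacities and threshold `ℓ = k`, the DN instance has
a feasible solution of value `≥ k` iff `G` contains `k` pairwise arc-disjoint
s-t paths. -/
theorem DND_kDisjointPaths_reduction
    {V : Type} [Fintype V] [DecidableEq V] (E : Finset (V × V)) (s t : V) (k : ℕ) :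
    (∃ σ : Fin k → Option (List (V × V)),
      (∀ i p, σ i = some p → IsSTPath E s t p) ∧
      -- unit capacity constraint on every arc (C = 1, bw = 1)
      (∀ a : V × V,
        (Finset.univ.filter (fun i : Fin k => ∃ p, σ i = some p ∧ a ∈ p)).card ≤ 1) ∧
      -- objective value at least ℓ = k: all k unit demands are accepted
      k ≤ (Finset.univ.filter (fun i : Fin k => σ i ≠ none)).card) ↔
    (∃ f : Fin k → List (V × V), (∀ i, IsSTPath E s t (f i)) ∧
      ∀ i j, i ≠ j → ∀ a, a ∈ f i → a ∉ f j) := by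
  constructor
  · rintro ⟨σ, hpath, hcap, hcard⟩
    -- all σ i are some
    have hall : ∀ i, σ i ≠ none := by
      by_contra h
      push_neg at h
      obtain ⟨i, hi⟩ := h
      have hsub : (Finset.univ.filter (fun i : Fin k => σ i ≠ none)) ⊆
          Finset.univ.erase i := by
        intro j hj
        simp only [Finset.mem_filter] at hj
        refine Finset.mem_erase.2 ⟨?_, Finset.mem_univ _⟩
        rintro rfl; exact hj.2 hi
      have hle := Finset.card_le_card hsub
      have h2 : (Finset.univ.erase i).card < k := by
        rw [Finset.card_erase_of_mem (Finset.mem_univ i)]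
        simp only [Finset.card_univ, Fintype.card_fin]
        have hk := i.is_lt
        omega
      exact Nat.lt_irrefl k (lt_of_le_of_lt (hcard.trans hle) h2)
    refine ⟨fun i => (σ i).get (Option.ne_none_iff_isSome.mp (hall i)), ?_, ?_⟩
    · intro i
      exact hpath i _ (Option.some_get _).symm
    · intro i j hij a hai haj
      have hmem : ∀ m : Fin k, a ∈ (σ m).get (Option.ne_none_iff_isSome.mp (hall m)) →
          m ∈ Finset.univ.filter (fun m : Fin k => ∃ p, σ m = some p ∧ a ∈ p) := by
        intro m hm
        refine Finset.mem_filter.2 ⟨Finset.mem_univ _, ⟨_, ?_, hm⟩⟩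
        exact ((σ m).some_get (Option.ne_none_iff_isSome.mp (hall m))).symm
      have hi := hmem i hai
      have hj := hmem j haj
      have := Finset.one_lt_card.2 ⟨i, hi, j, hj, hij⟩
      exact absurd (hcap a) (by omega)
  · rintro ⟨f, hf, hdisj⟩
    refine ⟨fun i => some (f i), ?_, ?_, ?_⟩
    · intro i p hp
      obtain rfl : f i = p := by simpa using hp
      exact hf i
    · intro a
      refine Finset.card_le_one.2 ?_
      intro i hi j hj
      simp only [Finset.mem_filter, Option.some.injEq] at hi hj
      obtain ⟨-, p, hp, hap⟩ := hi
      obtain ⟨-, q, hq, haq⟩ := hj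
      subst hp; subst hq
      by_contra hij
      exact hdisj i j hij a hap haq
    · have : (Finset.univ.filter (fun i : Fin k => (some (f i) : Option (List (V × V))) ≠ none)) = Finset.univ := by
        refine Finset.filter_true_of_mem ?_
        intro i _; simp
      rw [this]; simp
end

section
/- In the extended graph construction, a path in G^ext from s^d_0 to t^d_{c'} (for some c') corresponds bijectively to an s-path p in G from s^d to t^d with cycle-shift sequence (r_1,...,r_{|p|-1}), 0 ≤ r_k ≤ R, where each arc of the G^ext-path has the form (u_c, v_{(c + Δ_{(u,v)} + r) mod C}), and the subscript c of each visited node u_c equals Δ_u(p) mod C. -/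
/-- An s-path from `s` to `t`: a path with `n ≥ 1` arcs (`node i`, `node (i+1)` for
`i < n`) together with cycle shifts `shift i ≤ R` at the intermediate nodes
`i = 1, …, n-1` (no shift at the source or the destination). Values outside the
meaningful range are pinned so that the structure carries no junk data. -/
structure SPath (V : Type) (A : Set (V × V)) (Δ : V × V → ℕ) (R : ℕ) (s t : V) where
  n : ℕ
  hn : 0 < n
  node : ℕ → V
  shift : ℕ → ℕ
  hs : node 0 = s
  ht : node n = t
  hjunknode : ∀ i, n < i → node i = t
  harc : ∀ i < n, (node i, node (i + 1)) ∈ A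
  hshift0 : shift 0 = 0
  hshiftR : ∀ i, 0 < i → i < n → shift i ≤ R
  hshiftjunk : ∀ i, n ≤ i → shift i = 0

/-- Cumulative delay `Δ_u(p)` at the `k`-th node of the s-path `p`: sum of the first
`k` arc delays plus all cycle shifts applied up to (and including) that node. -/
def SPath.cum {V : Type} {A : Set (V × V)} {Δ : V × V → ℕ} {R : ℕ} {s t : V}
    (p : SPath V A Δ R s t) (k : ℕ) : ℕ :=
  (∑ j ∈ Finset.range k, Δ (p.node j, p.node (j + 1))) +
    ∑ j ∈ Finset.range (k + 1), p.shift j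

/-- A path in the extended graph `G^ext` from `s_0` to `t_{c'}`: each arc has the form
`(u_c, v_{(c + Δ_{(u,v)} + r) % C})` with `0 ≤ r ≤ R` (and `r = 0` on the arc entering
the destination, which carries no shift). Junk values are pinned. -/
structure ExtPath (V : Type) (A : Set (V × V)) (Δ : V × V → ℕ) (R C : ℕ) (s t : V) where
  n : ℕ
  hn : 0 < n
  node : ℕ → V
  cyc : ℕ → ℕ
  hcyclt : ∀ i, cyc i < C
  hs : node 0 = s
  hc0 : cyc 0 = 0
  ht : node n = t
  hjunknode : ∀ i, n < i → node i = t
  hjunkcyc : ∀ i, n < i → cyc i = 0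
  harc : ∀ i < n, (node i, node (i + 1)) ∈ A ∧
    ∃ r ≤ R, (i + 1 = n → r = 0) ∧
      cyc (i + 1) = (cyc i + Δ (node i, node (i + 1)) + r) % C

section Aux

variable {V : Type} {A : Set (V × V)} {Δ : V × V → ℕ} {R C : ℕ} {s t : V}

lemma uniq (hC : 0 < C) (y r : ℕ) (hr : r < C) :
    ((y + r) % C + (C - y % C)) % C = r := by
  have ha : y % C < C := Nat.mod_lt _ hC
  have h1 : (y + r) % C = (y % C + r) % C := by
    rw [Nat.add_mod, Nat.mod_eq_of_lt hr]
  rcases lt_or_ge (y % C + r) C with h | h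
  · rw [h1, Nat.mod_eq_of_lt h]
    have : y % C + r + (C - y % C) = C + r := by omega
    rw [this, Nat.add_mod_left, Nat.mod_eq_of_lt hr]
  · have h2 : (y % C + r) % C = y % C + r - C := by
      rw [Nat.mod_eq_sub_mod h, Nat.mod_eq_of_lt (by omega)]
    rw [h1, h2]
    have : y % C + r - C + (C - y % C) = r := by omega
    rw [this, Nat.mod_eq_of_lt hr]

lemma cum_zero (p : SPath V A Δ R s t) : p.cum 0 = 0 := by
  simp [SPath.cum, p.hshift0]

lemma cum_succ (p : SPath V A Δ R s t) (k : ℕ) :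
    p.cum (k + 1) = p.cum k + Δ (p.node k, p.node (k + 1)) + p.shift (k + 1) := by
  unfold SPath.cum
  rw [Finset.sum_range_succ (f := fun j => Δ (p.node j, p.node (j + 1))),
    Finset.sum_range_succ (f := p.shift) (n := k + 1)]
  ring

lemma SPath.ext' (p q : SPath V A Δ R s t) (hn : p.n = q.n)
    (hnode : p.node = q.node) (hshift : p.shift = q.shift) : p = q := by
  cases p; cases q; simp_all

lemma ExtPath.ext' (p q : ExtPath V A Δ R C s t) (hn : p.n = q.n)
    (hnode : p.node = q.node) (hcyc : p.cyc = q.cyc) : p = q := by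
  cases p; cases q; simp_all

def fwd (hC : 0 < C) (p : SPath V A Δ R s t) : ExtPath V A Δ R C s t where
  n := p.n
  hn := p.hn
  node := p.node
  cyc k := if k ≤ p.n then p.cum k % C else 0
  hcyclt i := by split <;> [exact Nat.mod_lt _ hC; exact hC]
  hs := p.hs
  hc0 := by simp [cum_zero p]
  ht := p.ht
  hjunknode := p.hjunknode
  hjunkcyc i hi := by rw [if_neg (by omega)]
  harc i hi := by
    refine ⟨p.harc i hi, p.shift (i + 1), ?_, ?_, ?_⟩
    · by_cases h : i + 1 = p.n
      · rw [h, p.hshiftjunk _ le_rfl]; exact Nat.zero_le R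
      · exact p.hshiftR _ (Nat.succ_pos _) (by omega)
    · intro h; rw [h]; exact p.hshiftjunk _ le_rfl
    · rw [if_pos (by omega), if_pos (by omega), cum_succ]
      conv_rhs => rw [add_assoc, Nat.mod_add_mod, ← add_assoc]

def bwd (hC : 0 < C) (hRC : R < C) (q : ExtPath V A Δ R C s t) :
    SPath V A Δ R s t where
  n := q.n
  hn := q.hn
  node := q.node
  shift k := if 0 < k ∧ k < q.n then
    (q.cyc k + (C - (q.cyc (k - 1) + Δ (q.node (k - 1), q.node k)) % C)) % C
    else 0
  hs := q.hs
  ht := q.ht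
  hjunknode := q.hjunknode
  harc i hi := (q.harc i hi).1
  hshift0 := by simp
  hshiftjunk i hi := by rw [if_neg (by omega)]
  hshiftR i h0 hn := by
    rw [if_pos ⟨h0, hn⟩]
    obtain ⟨-, r, hrR, -, hcyc⟩ := q.harc (i - 1) (by omega)
    have hi1 : i - 1 + 1 = i := by omega
    rw [hi1] at hcyc
    rw [hcyc, uniq hC _ r (by omega)]
    exact hrR

lemma bwd_cum (hC : 0 < C) (hRC : R < C) (q : ExtPath V A Δ R C s t) :
    ∀ k ≤ q.n, (bwd hC hRC q).cum k % C = q.cyc k := by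
  intro k hk
  induction k with
  | zero => rw [cum_zero, q.hc0, Nat.zero_mod]
  | succ k ih =>
    have hk' : k < q.n := by omega
    obtain ⟨-, r, hrR, h0, hcyc⟩ := q.harc k hk'
    have hnode : (bwd hC hRC q).node = q.node := rfl
    rw [cum_succ, hnode, add_assoc, ← Nat.mod_add_mod, ih (by omega), ← add_assoc]
    by_cases h : k + 1 = q.n
    · have hs0 : (bwd hC hRC q).shift (k + 1) = 0 := by
        show (if _ ∧ _ then _ else _) = 0
        rw [if_neg (by omega)]
      rw [hs0, h0 h] at *
      rw [hcyc]
    · have hs : (bwd hC hRC q).shift (k + 1) = r := by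
        show (if _ ∧ _ then _ else _) = r
        rw [if_pos ⟨Nat.succ_pos _, by omega⟩]
        simp only [Nat.add_sub_cancel]
        rw [hcyc, uniq hC _ r (by omega)]
      rw [hs, hcyc]

end Aux


/-- S-paths in `G` correspond bijectively to paths in the extended graph `G^ext`
from `s_0` to some `t_{c'}`: the bijection preserves the underlying nodes, and the
cycle subscript of each visited node `u` equals `Δ_u(p) mod C`. -/
theorem spath_extpath_bijection
    {V : Type} (A : Set (V × V)) (Δ : V × V → ℕ) (R C : ℕ)
    (hC : 0 < C) (hRC : R < C) (s t : V) :
    ∃ e : SPath V A Δ R s t ≃ ExtPath V A Δ R C s t,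
      ∀ p : SPath V A Δ R s t,
        (e p).n = p.n ∧ (∀ k, (e p).node k = p.node k) ∧
        ∀ k ≤ p.n, (e p).cyc k = p.cum k % C := by
  refine ⟨⟨fwd hC, bwd hC hRC, ?_, ?_⟩, ?_⟩
  · intro p
    refine SPath.ext' _ _ rfl rfl (funext fun k => ?_)
    show (if _ ∧ _ then _ else _) = p.shift k
    by_cases h : 0 < k ∧ k < p.n
    · rw [if_pos (show 0 < k ∧ k < (fwd (C := C) hC p).n from h)]
      obtain ⟨h0, hn⟩ := h
      have hcyck : (fwd hC p).cyc k = p.cum k % C := by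
        show (if _ then _ else _) = _
        rw [if_pos (by omega)]
      have hcyck1 : (fwd (C := C) hC p).cyc (k - 1) = p.cum (k - 1) % C := by
        show (if _ then _ else _) = _
        rw [if_pos (by omega)]
      have hnode : (fwd (C := C) hC p).node = p.node := rfl
      rw [hcyck, hcyck1, hnode]
      have hinner : (p.cum (k - 1) % C + Δ (p.node (k - 1), p.node k)) % C
          = (p.cum (k - 1) + Δ (p.node (k - 1), p.node k)) % C :=
        Nat.mod_add_mod _ _ _
      rw [hinner]
      have hk1 : k - 1 + 1 = k := by omega
      have := cum_succ p (k - 1)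
      rw [hk1] at this
      rw [this, uniq hC _ _ (lt_of_le_of_lt (p.hshiftR k h0 hn) hRC)]
    · rw [if_neg (show ¬(0 < k ∧ k < (fwd (C := C) hC p).n) from h)]
      rcases Nat.eq_zero_or_pos k with h0 | h0
      · rw [h0, p.hshift0]
      · exact (p.hshiftjunk k (by omega)).symm
  · intro q
    refine ExtPath.ext' _ _ rfl rfl (funext fun k => ?_)
    show (if _ then _ else _) = q.cyc k
    by_cases h : k ≤ q.n
    · rw [if_pos (show k ≤ (bwd hC hRC q).n from h)]; exact bwd_cum hC hRC q k h
    · rw [if_neg (show ¬k ≤ (bwd hC hRC q).n from h), q.hjunkcyc k (by omega)]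
  · intro p
    refine ⟨rfl, fun k => rfl, fun k hk => ?_⟩
    show (if _ then _ else _) = _
    rw [if_pos hk]
end
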